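/- Let 0 < s < k ≤ n be positive integers and L = {1, 2, …, s}. Suppose n > C(k², 2)·s + 1. Let ℱ be an L-intersecting, k-uniform family of subsets of [n] with |ℱ| = C(n−1, s). Then ⋂_{F∈ℱ} F ≠ ∅. -/

import Mathlib

/-- If 0 < s < k ≤ n, n > C(k²,2)·s + 1, and ℱ is a {1,…,s}-intersecting
k-uniform family of subsets of [n] of size exactly C(n-1, s), then the members
of ℱ have a common element. -/
theorem stmt_7 (n k s : ℕ) (hs : 0 < s) (hsk : s < k) (hkn : k ≤ n)
    (hn : (k ^ 2).choose 2 * s + 1 < n)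
    (ℱ : Finset (Finset (Fin n)))
    (huniform : ∀ F ∈ ℱ, F.card = k)
    (hL : ∀ E ∈ ℱ, ∀ F ∈ ℱ, E ≠ F → (E ∩ F).card ∈ Finset.Icc 1 s)
    (hcard : ℱ.card = (n - 1).choose s) :
    (ℱ.inf id).Nonempty := by
  by_contra hne
  -- basic numerics
  have hk2 : 2 ≤ k := by omega
  have hCk : k * k ≤ (k ^ 2).choose 2 := by
    rw [Nat.choose_two_right]
    rw [Nat.le_div_iff_mul_le (by norm_num : (0:ℕ) < 2)]
    have h4 : 4 ≤ k ^ 2 := by nlinarith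
    calc k * k * 2 = k ^ 2 * 2 := by ring
      _ ≤ k ^ 2 * (k ^ 2 - 1) := Nat.mul_le_mul_left _ (by omega)
  have hk2s : k * k * s < n - 1 := by
    have := Nat.mul_le_mul_right s hCk
    omega
  have hn2 : s + 2 ≤ n := by
    have h4 : 4 * s ≤ k * k * s := Nat.mul_le_mul_right s (by nlinarith)
    omega
  -- counting function
  set c : Finset (Fin n) → ℕ := fun T => (ℱ.filter (fun F => T ⊆ F)).card with hc
  -- base case: a set of size s+1 is contained in at most one member
  have hbase : ∀ T : Finset (Fin n), T.card = s + 1 → c T ≤ 1 := by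
    intro T hT
    refine Finset.card_le_one.mpr ?_
    intro F hF F' hF'
    rw [Finset.mem_filter] at hF hF'
    by_contra hFF
    have hI := hL F hF.1 F' hF'.1 hFF
    rw [Finset.mem_Icc] at hI
    have hsub : T ⊆ F ∩ F' := Finset.subset_inter hF.2 hF'.2
    have hle := Finset.card_le_card hsub
    omega
  -- recursion
  have hrec : ∀ T : Finset (Fin n),
      (k - T.card) * c T ≤ ∑ x ∈ Tᶜ, c (insert x T) := by
    intro T
    have key : ∀ x : Fin n, c (insert x T)
        = ∑ F ∈ ℱ.filter (fun F => T ⊆ F), (if x ∈ F then 1 else 0) := by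
      intro x
      rw [hc]
      simp only [Finset.card_filter, Finset.sum_filter]
      refine Finset.sum_congr rfl fun F _ => ?_
      by_cases h1 : T ⊆ F <;> by_cases h2 : x ∈ F <;>
        simp [Finset.insert_subset_iff, h1, h2]
    refine le_of_eq ?_
    calc (k - T.card) * c T
        = ∑ F ∈ ℱ.filter (fun F => T ⊆ F), (k - T.card) := by
          rw [Finset.sum_const, smul_eq_mul, mul_comm]
      _ = ∑ F ∈ ℱ.filter (fun F => T ⊆ F), ∑ x ∈ Tᶜ, (if x ∈ F then 1 else 0) := by
          refine Finset.sum_congr rfl fun F hF => ?_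
          rw [Finset.mem_filter] at hF
          have : ∑ x ∈ Tᶜ, (if x ∈ F then 1 else 0) = (Tᶜ.filter (fun x => x ∈ F)).card := by
            rw [Finset.card_filter]
          rw [this]
          have hset : Tᶜ.filter (fun x => x ∈ F) = F \ T := by
            ext a
            simp [Finset.mem_filter, Finset.mem_sdiff, and_comm]
          rw [hset, Finset.card_sdiff_of_subset hF.2, huniform F hF.1]
      _ = ∑ x ∈ Tᶜ, ∑ F ∈ ℱ.filter (fun F => T ⊆ F), (if x ∈ F then 1 else 0) :=
          Finset.sum_comm
      _ = ∑ x ∈ Tᶜ, c (insert x T) := by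
          refine Finset.sum_congr rfl fun x _ => (key x).symm
  -- iterated bound
  have hiter : ∀ m : ℕ, ∀ T : Finset (Fin n), T.card + m = s + 1 →
      c T * ∏ i ∈ Finset.range m, (k - T.card - i) ≤ ∏ i ∈ Finset.range m, (n - T.card - i) := by
    intro m
    induction m with
    | zero =>
      intro T hT
      simpa using hbase T (by omega)
    | succ m ih =>
      intro T hT
      have hshift1 : ∏ i ∈ Finset.range (m+1), (k - T.card - i)
          = (∏ i ∈ Finset.range m, (k - (T.card + 1) - i)) * (k - T.card) := by
        rw [Finset.prod_range_succ',
          Finset.prod_congr rfl (fun i (_ : i ∈ Finset.range m) =>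
            (by omega : k - T.card - (i + 1) = k - (T.card + 1) - i)), Nat.sub_zero]
      have hshift2 : ∏ i ∈ Finset.range (m+1), (n - T.card - i)
          = (∏ i ∈ Finset.range m, (n - (T.card + 1) - i)) * (n - T.card) := by
        rw [Finset.prod_range_succ',
          Finset.prod_congr rfl (fun i (_ : i ∈ Finset.range m) =>
            (by omega : n - T.card - (i + 1) = n - (T.card + 1) - i)), Nat.sub_zero]
      rw [hshift1, hshift2]
      calc c T * ((∏ i ∈ Finset.range m, (k - (T.card + 1) - i)) * (k - T.card))
          = ((k - T.card) * c T) * ∏ i ∈ Finset.range m, (k - (T.card + 1) - i) := by ring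
        _ ≤ (∑ x ∈ Tᶜ, c (insert x T)) * ∏ i ∈ Finset.range m, (k - (T.card + 1) - i) :=
            Nat.mul_le_mul_right _ (hrec T)
        _ = ∑ x ∈ Tᶜ, c (insert x T) * ∏ i ∈ Finset.range m, (k - (T.card + 1) - i) :=
            Finset.sum_mul _ _ _
        _ ≤ ∑ x ∈ Tᶜ, ∏ i ∈ Finset.range m, (n - (T.card + 1) - i) := by
            refine Finset.sum_le_sum fun x hx => ?_
            have hxT : x ∉ T := by simpa using hx
            have hcardi : (insert x T).card + m = s + 1 := by
              rw [Finset.card_insert_of_notMem hxT]; omega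
            have := ih (insert x T) hcardi
            rwa [Finset.card_insert_of_notMem hxT] at this
        _ = Tᶜ.card * ∏ i ∈ Finset.range m, (n - (T.card + 1) - i) := by
            rw [Finset.sum_const, smul_eq_mul]
        _ = (∏ i ∈ Finset.range m, (n - (T.card + 1) - i)) * (n - T.card) := by
            rw [Finset.card_compl, Fintype.card_fin]; ring
  -- products P and Q
  set P : ℕ := ∏ i ∈ Finset.range (s-1), (k - 2 - i) with hP
  set Q : ℕ := ∏ i ∈ Finset.range (s-1), (n - 2 - i) with hQ
  -- existence of witnesses
  have hFne : ℱ.Nonempty := by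
    rw [← Finset.card_pos, hcard]
    exact Nat.choose_pos (by omega)
  obtain ⟨F1, hF1⟩ := hFne
  have hGex : ∀ x : Fin n, ∃ G ∈ ℱ, x ∉ G := by
    intro x
    by_contra h
    push_neg at h
    have hsub : ({x} : Finset (Fin n)) ⊆ ℱ.inf id :=
      Finset.le_inf fun F hF => Finset.singleton_subset_iff.mpr (h F hF)
    exact hne ⟨x, Finset.mem_of_subset hsub (Finset.mem_singleton_self x)⟩
  choose G hG hGx using hGex
  -- covering
  have hcov : ℱ.card ≤ ∑ x ∈ F1, ∑ y ∈ G x, (ℱ.filter (fun F => x ∈ F ∧ y ∈ F)).card := by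
    have hsub : ℱ ⊆ F1.biUnion (fun x => (G x).biUnion
        (fun y => ℱ.filter (fun F => x ∈ F ∧ y ∈ F))) := by
      intro F hF
      have hF1F : (F ∩ F1).Nonempty := by
        rcases eq_or_ne F F1 with rfl | hne'
        · rw [Finset.inter_self]
          refine Finset.card_pos.mp ?_
          rw [huniform F hF]; omega
        · have hI := hL F hF F1 hF1 hne'
          rw [Finset.mem_Icc] at hI
          exact Finset.card_pos.mp (by omega)
      obtain ⟨x, hx⟩ := hF1F
      rw [Finset.mem_inter] at hx
      have hFG : F ≠ G x := fun h => hGx x (h ▸ hx.1)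
      have hI := hL F hF (G x) (hG x) hFG
      rw [Finset.mem_Icc] at hI
      obtain ⟨y, hy⟩ := Finset.card_pos.mp (show 0 < (F ∩ G x).card by omega)
      rw [Finset.mem_inter] at hy
      rw [Finset.mem_biUnion]
      exact ⟨x, hx.2, Finset.mem_biUnion.mpr
        ⟨y, hy.2, Finset.mem_filter.mpr ⟨hF, hx.1, hy.1⟩⟩⟩
    calc ℱ.card ≤ (F1.biUnion (fun x => (G x).biUnion
          (fun y => ℱ.filter (fun F => x ∈ F ∧ y ∈ F)))).card := Finset.card_le_card hsub
      _ ≤ ∑ x ∈ F1, ((G x).biUnion (fun y => ℱ.filter (fun F => x ∈ F ∧ y ∈ F))).card :=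
          Finset.card_biUnion_le
      _ ≤ ∑ x ∈ F1, ∑ y ∈ G x, (ℱ.filter (fun F => x ∈ F ∧ y ∈ F)).card :=
          Finset.sum_le_sum fun x _ => Finset.card_biUnion_le
  -- pair bound
  have hpair : ∀ x : Fin n, ∀ y ∈ G x, (ℱ.filter (fun F => x ∈ F ∧ y ∈ F)).card * P ≤ Q := by
    intro x y hy
    have hxy : x ≠ y := fun h => hGx x (h ▸ hy)
    have hfe : ℱ.filter (fun F => x ∈ F ∧ y ∈ F)
        = ℱ.filter (fun F => ({x, y} : Finset (Fin n)) ⊆ F) := by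
      refine Finset.filter_congr fun F _ => ?_
      simp [Finset.insert_subset_iff]
    have hc2 : ({x, y} : Finset (Fin n)).card + (s - 1) = s + 1 := by
      rw [Finset.card_pair hxy]; omega
    have h := hiter (s - 1) {x, y} hc2
    rw [Finset.card_pair hxy] at h
    rw [hfe]
    exact h
  -- total bound
  have htot : ℱ.card * P ≤ k * k * Q := by
    calc ℱ.card * P
        ≤ (∑ x ∈ F1, ∑ y ∈ G x, (ℱ.filter (fun F => x ∈ F ∧ y ∈ F)).card) * P :=
          Nat.mul_le_mul_right _ hcov
      _ = ∑ x ∈ F1, ∑ y ∈ G x, (ℱ.filter (fun F => x ∈ F ∧ y ∈ F)).card * P := by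
          rw [Finset.sum_mul]
          exact Finset.sum_congr rfl fun x _ => Finset.sum_mul _ _ _
      _ ≤ ∑ x ∈ F1, ∑ y ∈ G x, Q :=
          Finset.sum_le_sum fun x _ => Finset.sum_le_sum fun y hy => hpair x y hy
      _ = ∑ x ∈ F1, (G x).card * Q := by
          exact Finset.sum_congr rfl fun x _ => by rw [Finset.sum_const, smul_eq_mul]
      _ = ∑ x ∈ F1, k * Q :=
          Finset.sum_congr rfl fun x _ => by rw [huniform (G x) (hG x)]
      _ = F1.card * (k * Q) := by rw [Finset.sum_const, smul_eq_mul]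
      _ = k * k * Q := by rw [huniform F1 hF1]; ring
  -- numeric comparison
  have hQpos : 0 < Q := by
    rw [hQ]
    refine Finset.prod_pos fun i hi => ?_
    rw [Finset.mem_range] at hi
    omega
  have hPfac : (s - 1).factorial ≤ P := by
    have h1 : (s - 1).factorial = ∏ i ∈ Finset.range (s - 1), (s - 1 - i) := by
      have := Finset.prod_range_reflect (fun j => j + 1) (s - 1)
      have h2 : ∏ j ∈ Finset.range (s-1), (j + 1) = (s-1).factorial := by
        rw [Finset.prod_range_add_one_eq_factorial]
      rw [← h2, ← this]
      exact Finset.prod_congr rfl fun i hi => by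
        rw [Finset.mem_range] at hi; omega
    rw [h1, hP]
    exact Finset.prod_le_prod' fun i hi => by
      rw [Finset.mem_range] at hi; omega
  have hds : (n - 1).choose s * s.factorial = (n - 1) * Q := by
    have h1 : (n - 1).descFactorial s = (n - 1).choose s * s.factorial := by
      rw [Nat.descFactorial_eq_factorial_mul_choose]; ring
    have h2 : (n - 1).descFactorial s = ∏ i ∈ Finset.range s, (n - 1 - i) :=
      Nat.descFactorial_eq_prod_range _ _
    have hs1 : s - 1 + 1 = s := by omega
    have h3 : ∏ i ∈ Finset.range s, (n - 1 - i)
        = (∏ i ∈ Finset.range (s-1), (n - 2 - i)) * (n - 1) := by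
      rw [← hs1, Finset.prod_range_succ',
        Finset.prod_congr rfl (fun i (_ : i ∈ Finset.range (s - 1)) =>
          (by omega : n - 1 - (i + 1) = n - 2 - i)), Nat.sub_zero, Nat.add_sub_cancel]
    rw [← h1, h2, h3, hQ]; ring
  have hfin : k * k * Q < (n - 1).choose s * P := by
    have h1 : k * k * s.factorial < (n - 1) * P := by
      have hsf : s.factorial = s * (s - 1).factorial := (Nat.mul_factorial_pred hs.ne').symm
      calc k * k * s.factorial = (k * k * s) * (s - 1).factorial := by rw [hsf]; ring
        _ < (n - 1) * (s - 1).factorial :=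
            mul_lt_mul_of_pos_right hk2s (Nat.factorial_pos _)
        _ ≤ (n - 1) * P := Nat.mul_le_mul_left _ hPfac
    have h2 : (k * k * Q) * s.factorial < ((n - 1).choose s * P) * s.factorial := by
      calc (k * k * Q) * s.factorial = (k * k * s.factorial) * Q := by ring
        _ < ((n - 1) * P) * Q := mul_lt_mul_of_pos_right h1 hQpos
        _ = ((n - 1) * Q) * P := by ring
        _ = ((n - 1).choose s * s.factorial) * P := by rw [hds]
        _ = ((n - 1).choose s * P) * s.factorial := by ring
    exact Nat.lt_of_mul_lt_mul_right h2
  have : ℱ.card * P < (n - 1).choose s * P := lt_of_le_of_lt htot hfin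
  rw [hcard] at this
  exact lt_irrefl _ this
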